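/- The optimal cost of the minimum-energy double integrator problem with x(0) = (-1,0), x(1) = (0,0) equals 6. -/

import Mathlib

open intervalIntegral Set

/-- A continuous control `u` is feasible for the double integrator on `[0,1]`
with `x(0) = (-1,0)`, `x(1) = (0,0)`. -/
def DIFeasible (u : ℝ → ℝ) : Prop :=
  ∃ x1 x2 : ℝ → ℝ,
    (∀ t ∈ Set.Icc (0:ℝ) 1, HasDerivAt x1 (x2 t) t ∧ HasDerivAt x2 (u t) t) ∧
    x1 0 = -1 ∧ x2 0 = 0 ∧ x1 1 = 0 ∧ x2 1 = 0

lemma key_integral : ∫ t in (0:ℝ)..1, (6 - 12 * t)^2 = 12 := by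
  have hF : ∀ t ∈ Set.uIcc (0:ℝ) 1,
      HasDerivAt (fun s : ℝ => 36*s - 72*s^2 + 48*s^3) ((6 - 12*t)^2) t := by
    intro t _
    have h : HasDerivAt (fun s : ℝ => 36*s - 72*s^2 + 48*s^3)
        (36*1 - 72*((2:ℕ)*t^1) + 48*((3:ℕ)*t^2)) t :=
      (((hasDerivAt_id t).const_mul 36).sub
        ((hasDerivAt_pow 2 t).const_mul 72)).add ((hasDerivAt_pow 3 t).const_mul 48)
    convert h using 1; push_cast; ring
  have hint : IntervalIntegrable (fun t : ℝ => (6 - 12*t)^2) MeasureTheory.volume 0 1 :=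
    Continuous.intervalIntegrable (by continuity) 0 1
  have := intervalIntegral.integral_eq_sub_of_hasDerivAt hF hint
  rw [this]; norm_num

lemma lower (u x1 x2 : ℝ → ℝ) (hu : Continuous u)
    (hd : ∀ t ∈ Set.Icc (0:ℝ) 1, HasDerivAt x1 (x2 t) t ∧ HasDerivAt x2 (u t) t)
    (h10 : x1 0 = -1) (h20 : x2 0 = 0) (h11 : x1 1 = 0) (h21 : x2 1 = 0) :
    12 ≤ ∫ t in (0:ℝ)..1, (u t)^2 := by
  have hIcc : Set.uIcc (0:ℝ) 1 = Set.Icc 0 1 := by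
    rw [Set.uIcc_of_le]; norm_num
  have hx2cont : ContinuousOn x2 (Set.Icc (0:ℝ) 1) := fun t ht =>
    ((hd t ht).2.continuousAt).continuousWithinAt
  have hx2int : IntervalIntegrable x2 MeasureTheory.volume 0 1 := by
    apply ContinuousOn.intervalIntegrable; rwa [hIcc]
  have hI1 : ∫ t in (0:ℝ)..1, x2 t = 1 := by
    have := intervalIntegral.integral_eq_sub_of_hasDerivAt
      (f := x1) (f' := x2) (by rw [hIcc]; exact fun t ht => (hd t ht).1) hx2int
    rw [this, h11, h10]; ring
  have hg : ∀ t ∈ Set.uIcc (0:ℝ) 1,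
      HasDerivAt (fun s => (6 - 12*s) * x2 s) ((6 - 12*t) * u t - 12 * x2 t) t := by
    rw [hIcc]; intro t ht
    have h1 : HasDerivAt (fun s : ℝ => 6 - 12*s) (-12) t := by
      simpa using ((hasDerivAt_id t).const_mul 12).const_sub 6
    have := h1.mul (hd t ht).2
    exact this.congr_deriv (by ring)
  have hx2int' : IntervalIntegrable (fun t => 12 * x2 t) MeasureTheory.volume 0 1 :=
    hx2int.const_mul 12
  have huint : IntervalIntegrable (fun t => (6-12*t)*u t) MeasureTheory.volume 0 1 :=
    Continuous.intervalIntegrable (by continuity) 0 1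
  have hgint : IntervalIntegrable (fun t => (6 - 12*t) * u t - 12 * x2 t)
      MeasureTheory.volume 0 1 := huint.sub hx2int'
  have hIBP := intervalIntegral.integral_eq_sub_of_hasDerivAt hg hgint
  have hsplit : (∫ t in (0:ℝ)..1, (6-12*t)*u t) - 12 * ∫ t in (0:ℝ)..1, x2 t = 0 := by
    rw [← intervalIntegral.integral_const_mul,
        ← intervalIntegral.integral_sub huint hx2int', hIBP]
    simp [h20, h21]
  have hI2 : ∫ t in (0:ℝ)..1, (6-12*t)*u t = 12 := by rw [hI1] at hsplit; linarith
  have i1 : IntervalIntegrable (fun t => (u t)^2) MeasureTheory.volume 0 1 :=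
    Continuous.intervalIntegrable (by continuity) 0 1
  have i2 : IntervalIntegrable (fun t => 2*((6-12*t)*u t)) MeasureTheory.volume 0 1 :=
    huint.const_mul 2
  have i3 : IntervalIntegrable (fun t : ℝ => (6-12*t)^2) MeasureTheory.volume 0 1 :=
    Continuous.intervalIntegrable (by continuity) 0 1
  have hsq : 0 ≤ ∫ t in (0:ℝ)..1, (u t - (6-12*t))^2 :=
    intervalIntegral.integral_nonneg (by norm_num) (fun t _ => sq_nonneg _)
  have hexp : (∫ t in (0:ℝ)..1, (u t - (6-12*t))^2)
      = (∫ t in (0:ℝ)..1, (u t)^2) - 2*12 + 12 := by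
    have hc : (∫ t in (0:ℝ)..1, (u t - (6-12*t))^2)
        = ∫ t in (0:ℝ)..1, ((u t)^2 - 2*((6-12*t)*u t) + (6-12*t)^2) :=
      intervalIntegral.integral_congr (fun t _ => by ring)
    rw [hc, intervalIntegral.integral_add (i1.sub i2) i3,
        intervalIntegral.integral_sub i1 i2,
        intervalIntegral.integral_const_mul, hI2, key_integral]
  linarith [hexp ▸ hsq]

/-- The optimal cost of the minimum-energy double integrator problem is `6`,
attained by `u(t) = 6 - 12 t`. -/
theorem double_integrator_optimal_cost :
    ((1/2) * (∫ t in (0:ℝ)..1, (6 - 12 * t)^2) = 6 ∧ DIFeasible (fun t => 6 - 12 * t)) ∧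
    IsLeast {c : ℝ | ∃ u : ℝ → ℝ, Continuous u ∧ DIFeasible u ∧
      c = (1/2) * ∫ t in (0:ℝ)..1, (u t)^2} 6 := by
  have hfeas : DIFeasible (fun t => 6 - 12 * t) := by
    refine ⟨fun t => -1 + 3*t^2 - 2*t^3, fun t => 6*t - 6*t^2, fun t _ => ⟨?_, ?_⟩,
      by norm_num, by norm_num, by norm_num, by norm_num⟩
    · have h : HasDerivAt (fun s : ℝ => -1 + 3*s^2 - 2*s^3)
          (0 + 3*((2:ℕ)*t^1) - 2*((3:ℕ)*t^2)) t :=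
        ((hasDerivAt_const t (-1)).add ((hasDerivAt_pow 2 t).const_mul 3)).sub
          ((hasDerivAt_pow 3 t).const_mul 2)
      convert h using 1; push_cast; ring
    · have h : HasDerivAt (fun s : ℝ => 6*s - 6*s^2) (6*1 - 6*((2:ℕ)*t^1)) t :=
        ((hasDerivAt_id t).const_mul 6).sub ((hasDerivAt_pow 2 t).const_mul 6)
      convert h using 1; push_cast; ring
  refine ⟨⟨by rw [key_integral]; norm_num, hfeas⟩,
    ⟨fun t => 6 - 12*t, by continuity, hfeas, by rw [key_integral]; norm_num⟩, ?_⟩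
  rintro c ⟨u, hu, ⟨x1, x2, hd, h10, h20, h11, h21⟩, rfl⟩
  have := lower u x1 x2 hu hd h10 h20 h11 h21
  linarith
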